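/- Let H be a finite-dimensional complex Hilbert space and let (f_1,…,f_n) be a frame for H with f_n ∉ span{f_1,…,f_{n−1}}. Let P be the orthogonal projection of H onto span{f_1,…,f_{n−1}} and let α = ‖(I−P)f_n‖^{−1}. Then for every m ≥ 1, the n-th vector of the m-th iterate Φ^m(f_1,…,f_n) equals α(I−P)f_n; in particular it is the same for all m ≥ 1. -/

import Mathlib

open scoped ComplexInnerProductSpace
open Finset Filter

open scoped Classical in
/-- One step of the generalized Gram–Schmidt procedure (GGSP): step `k` uses the
input vector `fk = f k` and the current tuple `g` (whose entries at indices `< k`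
have already been processed).  Here `⟪a, b⟫` is conjugate-linear in `a`, so the
paper's `⟨f_k, g_j⟩` (conjugate-linear in the second slot) is `⟪g j, f k⟫`. -/
noncomputable def ggspStep {H : Type*} [NormedAddCommGroup H] [InnerProductSpace ℂ H]
    {n : ℕ} (k : Fin n) (fk : H) (g : Fin n → H) : Fin n → H :=
  if fk = 0 then Function.update g k 0
  else
    let u := fk - ∑ j ∈ Finset.univ.filter (fun j : Fin n => j < k), ⟪g j, fk⟫ • g j
    if u = 0 then
      fun i =>
        if i < k then
          g i + (((1 / ‖fk‖ ^ 2) * (1 / Real.sqrt (1 + ‖fk‖ ^ 2) - 1) : ℝ)) •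
            (⟪fk, g i⟫ • fk)
        else if i = k then (Real.sqrt (1 + ‖fk‖ ^ 2))⁻¹ • fk
        else g i
    else Function.update g k (‖u‖⁻¹ • u)

/-- The generalized Gram–Schmidt procedure `Φ` of Casazza--Kutyniok. -/
noncomputable def GGSP {H : Type*} [NormedAddCommGroup H] [InnerProductSpace ℂ H]
    {n : ℕ} (f : Fin n → H) : Fin n → H :=
  (List.finRange n).foldl (fun g k => ggspStep k (f k) g) f

/-- `(f i)₁ⁿ` is a frame for `H`. -/
def IsFrame {H : Type*} [NormedAddCommGroup H] [InnerProductSpace ℂ H]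
    {n : ℕ} (f : Fin n → H) : Prop :=
  ∃ A B : ℝ, 0 < A ∧ A ≤ B ∧ ∀ x : H,
    A * ‖x‖ ^ 2 ≤ ∑ i, ‖⟪x, f i⟫‖ ^ 2 ∧ ∑ i, ‖⟪x, f i⟫‖ ^ 2 ≤ B * ‖x‖ ^ 2

section Auxiliary

variable {H : Type*} [NormedAddCommGroup H] [InnerProductSpace ℂ H] [FiniteDimensional ℂ H]

lemma ggsp_real_smul_eq (r : ℝ) (z : H) : r • z = ((r : ℂ)) • z := by
  rw [← one_smul ℂ z, ← smul_assoc]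
  norm_num

/-- Partial GGSP: the result of processing the first `k` steps. -/
noncomputable def pGG {N : ℕ} (f : Fin N → H) (k : ℕ) : Fin N → H :=
  ((List.finRange N).take k).foldl (fun g j => ggspStep j (f j) g) f

/-- Span of the first `k` input vectors. -/
noncomputable def Wk {N : ℕ} (f : Fin N → H) (k : ℕ) : Submodule ℂ H :=
  Submodule.span ℂ (f '' {j : Fin N | (j : ℕ) < k})

lemma pGG_zero {N : ℕ} (f : Fin N → H) : pGG f 0 = f := rfl

lemma pGG_succ {N : ℕ} (f : Fin N → H) {k : ℕ} (hk : k < N) :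
    pGG f (k + 1) = ggspStep ⟨k, hk⟩ (f ⟨k, hk⟩) (pGG f k) := by
  unfold pGG
  rw [List.take_succ, List.getElem?_eq_getElem (by simpa using hk), List.foldl_append]
  simp

lemma GGSP_eq_pGG {N : ℕ} (f : Fin N → H) : GGSP f = pGG f N := by
  unfold GGSP pGG
  rw [List.take_of_length_le (by simp)]

lemma proj_eq_zero_of_orth {V : Submodule ℂ H} {v : H} (hv : v ∈ Vᗮ) :
    (Submodule.orthogonalProjection V v : H) = 0 :=
  Submodule.eq_starProjection_of_mem_orthogonal (Submodule.zero_mem V) (by simpa using hv)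

lemma mem_of_sum_inner {N : ℕ} {V : Submodule ℂ H} {s : Finset (Fin N)} {g : Fin N → H}
    (h : ∀ x : H, ∑ j ∈ s, ⟪g j, x⟫ • g j = (Submodule.orthogonalProjection V x : H)) :
    ∀ j ∈ s, g j ∈ V := by
  intro j hj
  rw [← Submodule.orthogonal_orthogonal V, Submodule.mem_orthogonal]
  intro z hz
  have hz0 : (Submodule.orthogonalProjection V z : H) = 0 := proj_eq_zero_of_orth hz
  have h1 : ∑ i ∈ s, ⟪g i, z⟫ • g i = 0 := by rw [h z, hz0]
  have h2 : ∑ i ∈ s, (Complex.normSq ⟪g i, z⟫ : ℂ) = 0 := by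
    calc ∑ i ∈ s, (Complex.normSq ⟪g i, z⟫ : ℂ)
        = ⟪∑ i ∈ s, ⟪g i, z⟫ • g i, z⟫ := by
          rw [sum_inner]
          refine Finset.sum_congr rfl fun i _ => ?_
          rw [inner_smul_left, Complex.normSq_eq_conj_mul_self]
      _ = 0 := by rw [h1, inner_zero_left]
  have h3 : ∑ i ∈ s, Complex.normSq ⟪g i, z⟫ = 0 := by exact_mod_cast h2
  have h4 : Complex.normSq ⟪g j, z⟫ = 0 :=
    (Finset.sum_eq_zero_iff_of_nonneg (fun i _ => Complex.normSq_nonneg _)).1 h3 j hj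
  exact inner_eq_zero_symm.mp (Complex.normSq_eq_zero.1 h4)

set_option maxHeartbeats 1000000 in
/-- Main invariant: after `k` steps of GGSP, the processed vectors form a Parseval
frame for the span of the first `k` input vectors. -/
lemma pGG_sum_eq_proj {N : ℕ} (f : Fin N → H) :
    ∀ k : ℕ, k ≤ N → ∀ x : H,
      ∑ j ∈ Finset.univ.filter (fun j : Fin N => (j : ℕ) < k),
        ⟪pGG f k j, x⟫ • pGG f k j = (Submodule.orthogonalProjection (Wk f k) x : H) := by
  intro k
  induction k with
  | zero =>
      intro _ x
      have h1 : Finset.univ.filter (fun j : Fin N => (j : ℕ) < 0) = ∅ := by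
        ext j; simp
      have h2 : Wk f 0 = ⊥ := by
        unfold Wk
        have : {j : Fin N | (j : ℕ) < 0} = ∅ := by ext j; simp
        rw [this]; simp
      rw [h1, h2]; simp
  | succ k ih =>
      intro hk1 x
      have hkN : k < N := hk1
      set K : Fin N := ⟨k, hkN⟩ with hKdef
      set g := pGG f k with hgdef
      have IH := ih hkN.le
      have hfilt : Finset.univ.filter (fun j : Fin N => j < K)
          = Finset.univ.filter (fun j : Fin N => (j : ℕ) < k) := by
        ext j; simp [Fin.lt_def, hKdef]
      have hinsert : Finset.univ.filter (fun j : Fin N => (j : ℕ) < k + 1)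
          = insert K (Finset.univ.filter (fun j : Fin N => (j : ℕ) < k)) := by
        ext j
        simp only [Finset.mem_insert, Finset.mem_filter, Finset.mem_univ, true_and]
        constructor
        · intro hj
          rcases Nat.lt_succ_iff_lt_or_eq.1 hj with h | h
          · exact Or.inr h
          · exact Or.inl (Fin.ext h)
        · rintro (rfl | hj)
          · exact Nat.lt_succ_self k
          · exact hj.trans (Nat.lt_succ_self k)
      have hKnot : K ∉ Finset.univ.filter (fun j : Fin N => (j : ℕ) < k) := by simp [hKdef]
      have hsetins : {j : Fin N | (j : ℕ) < k + 1} = insert K {j : Fin N | (j : ℕ) < k} := by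
        ext j
        simp only [Set.mem_setOf_eq, Set.mem_insert_iff]
        constructor
        · intro hj
          rcases Nat.lt_succ_iff_lt_or_eq.1 hj with h | h
          · exact Or.inr h
          · exact Or.inl (Fin.ext h)
        · rintro (rfl | hj)
          · exact Nat.lt_succ_self k
          · exact hj.trans (Nat.lt_succ_self k)
      have hWk1 : Wk f (k + 1)
          = Submodule.span ℂ (insert (f K) (f '' {j : Fin N | (j : ℕ) < k})) := by
        unfold Wk; rw [hsetins, Set.image_insert_eq]
      rw [pGG_succ f hkN, ← hKdef, ← hgdef]
      by_cases hf0 : f K = 0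
      · -- Case A : f K = 0
        have hWeq : Wk f (k + 1) = Wk f k := by
          rw [hWk1, hf0, Submodule.span_insert_zero]; rfl
        have hstep : ggspStep K (f K) g = Function.update g K 0 := by
          rw [ggspStep, if_pos hf0]
        rw [hWeq, hstep, hinsert, Finset.sum_insert hKnot]
        simp only [Function.update_self, inner_zero_left, zero_smul, zero_add]
        rw [← IH x]
        refine Finset.sum_congr rfl fun j hj => ?_
        have hjK : j ≠ K := by
          rcases Finset.mem_filter.1 hj with ⟨-, hj'⟩
          exact fun h => absurd (h ▸ hj') (by simp [hKdef])
        rw [Function.update_of_ne hjK]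
      · have hueq : f K - ∑ j ∈ Finset.univ.filter (fun j : Fin N => j < K),
            ⟪g j, f K⟫ • g j
            = f K - (Submodule.orthogonalProjection (Wk f k) (f K) : H) := by
          rw [hfilt, IH (f K)]
        by_cases hu : f K - ∑ j ∈ Finset.univ.filter (fun j : Fin N => j < K),
            ⟪g j, f K⟫ • g j = 0
        · -- Case B2 : u = 0, f K ≠ 0
          have hfkW : f K ∈ Wk f k := by
            rw [← Submodule.starProjection_eq_self_iff (K := Wk f k)]
            exact (sub_eq_zero.1 (hueq ▸ hu)).symm
          have hWeq : Wk f (k + 1) = Wk f k := by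
            rw [hWk1, Submodule.span_insert_eq_span hfkW]; rfl
          set F := f K with hFdef
          set c : ℝ := (1 / ‖F‖ ^ 2) * (1 / Real.sqrt (1 + ‖F‖ ^ 2) - 1) with hcdef
          set s : ℝ := (Real.sqrt (1 + ‖F‖ ^ 2))⁻¹ with hsdef
          have hstep : ggspStep K F g = fun i =>
              if i < K then g i + c • (⟪F, g i⟫ • F)
              else if i = K then s • F else g i := by
            rw [ggspStep, if_neg hf0]
            exact if_pos hu
          have hPF : (Submodule.orthogonalProjection (Wk f k) F : H) = F :=
            Submodule.starProjection_eq_self_iff.2 hfkW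
          have hsF : ∑ j ∈ Finset.univ.filter (fun j : Fin N => (j : ℕ) < k),
              ⟪g j, F⟫ • g j = F := by rw [IH F, hPF]
          have hFsub : ∀ y : H, ⟪F, y - (Submodule.orthogonalProjection (Wk f k) y : H)⟫ = 0 :=
            fun y => ((Submodule.mem_orthogonal _ _).1
              (Submodule.sub_starProjection_mem_orthogonal y)) F hfkW
          have h2 : ∑ j ∈ Finset.univ.filter (fun j : Fin N => (j : ℕ) < k),
              ⟪g j, x⟫ * ⟪F, g j⟫ = ⟪F, x⟫ := by
            have hc := congrArg (fun v => (⟪F, v⟫ : ℂ)) (IH x)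
            simp only [inner_sum, inner_smul_right] at hc
            rw [hc]
            have h0 := hFsub x
            rw [inner_sub_right] at h0
            exact (sub_eq_zero.1 h0).symm
          have h3 : ∑ j ∈ Finset.univ.filter (fun j : Fin N => (j : ℕ) < k),
              ⟪g j, F⟫ * ⟪F, g j⟫ = ((‖F‖ : ℂ)) ^ 2 := by
            have hc := congrArg (fun v => (⟪F, v⟫ : ℂ)) hsF
            simp only [inner_sum, inner_smul_right] at hc
            rw [hc, inner_self_eq_norm_sq_to_K]
            norm_cast
          have hterm : ∀ j ∈ Finset.univ.filter (fun j : Fin N => (j : ℕ) < k),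
              (⟪(g j + c • (⟪F, g j⟫ • F)), x⟫ • (g j + c • (⟪F, g j⟫ • F)) : H)
                = ⟪g j, x⟫ • g j
                  + ((c : ℂ) * ⟪F, x⟫) • (⟪g j, F⟫ • g j)
                  + (((c : ℂ) * (⟪g j, x⟫ * ⟪F, g j⟫)) • F
                    + (((c : ℂ) ^ 2 * ⟪F, x⟫) * (⟪g j, F⟫ * ⟪F, g j⟫)) • F) := by
            intro j _
            rw [ggsp_real_smul_eq, smul_smul]
            simp only [inner_add_left, inner_smul_left, map_mul, Complex.conj_ofReal,
              inner_conj_symm]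
            match_scalars <;> ring
          have hgK : ggspStep K F g K = s • F := by
            rw [hstep]
            show (if K < K then g K + c • (⟪F, g K⟫ • F)
              else if K = K then s • F else g K) = s • F
            rw [if_neg (lt_irrefl K), if_pos rfl]
          have hgj : ∀ j ∈ Finset.univ.filter (fun j : Fin N => (j : ℕ) < k),
              ggspStep K F g j = g j + c • (⟪F, g j⟫ • F) := by
            intro j hj
            have hjK : j < K := by
              rcases Finset.mem_filter.1 hj with ⟨-, hj'⟩
              exact Fin.lt_def.2 hj'
            rw [hstep]
            show (if j < K then g j + c • (⟪F, g j⟫ • F)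
              else if j = K then s • F else g j) = _
            rw [if_pos hjK]
          have hsum_congr : ∑ j ∈ Finset.univ.filter (fun j : Fin N => (j : ℕ) < k),
              ⟪ggspStep K F g j, x⟫ • ggspStep K F g j
              = ∑ j ∈ Finset.univ.filter (fun j : Fin N => (j : ℕ) < k),
                  ⟪(g j + c • (⟪F, g j⟫ • F)), x⟫ • (g j + c • (⟪F, g j⟫ • F)) :=
            Finset.sum_congr rfl fun j hj => by rw [hgj j hj]
          have e1 : ∑ j ∈ Finset.univ.filter (fun j : Fin N => (j : ℕ) < k),
              (c : ℂ) * (⟪g j, x⟫ * ⟪F, g j⟫) = (c : ℂ) * ⟪F, x⟫ := by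
            rw [← Finset.mul_sum, h2]
          have e2 : ∑ j ∈ Finset.univ.filter (fun j : Fin N => (j : ℕ) < k),
              (c : ℂ) ^ 2 * ⟪F, x⟫ * (⟪g j, F⟫ * ⟪F, g j⟫)
              = (c : ℂ) ^ 2 * ⟪F, x⟫ * ((‖F‖ : ℂ)) ^ 2 := by
            rw [← Finset.mul_sum, h3]
          rw [hWeq, hinsert, Finset.sum_insert hKnot, hgK, hsum_congr,
            Finset.sum_congr rfl hterm, Finset.sum_add_distrib, Finset.sum_add_distrib,
            Finset.sum_add_distrib, ← Finset.smul_sum, ← Finset.sum_smul,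
            ← Finset.sum_smul, IH x, hsF, e1, e2]
          -- now everything is expressed in terms of `F` and the projection of `x`
          have hF0 : ‖F‖ ≠ 0 := norm_ne_zero_iff.2 hf0
          have hrpos : 0 < Real.sqrt (1 + ‖F‖ ^ 2) := Real.sqrt_pos.2 (by positivity)
          have hr2 : Real.sqrt (1 + ‖F‖ ^ 2) ^ 2 = 1 + ‖F‖ ^ 2 :=
            Real.sq_sqrt (by positivity)
          have hreal : 2 * c + c ^ 2 * ‖F‖ ^ 2 + s ^ 2 = 0 := by
            rw [hcdef, hsdef]
            field_simp
            nlinarith [hr2, hrpos, sq_nonneg ‖F‖]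
          have hcoef : ((s : ℂ)) * ⟪F, x⟫ * (s : ℂ)
              + ((c : ℂ) * ⟪F, x⟫)
              + ((c : ℂ) * ⟪F, x⟫)
              + ((c : ℂ)) ^ 2 * ⟪F, x⟫ * ((‖F‖ : ℂ)) ^ 2 = 0 := by
            have hcc : ((2 * c + c ^ 2 * ‖F‖ ^ 2 + s ^ 2 : ℝ) : ℂ) = 0 := by
              rw [hreal]; norm_num
            push_cast at hcc
            linear_combination ⟪F, x⟫ * hcc
          have hre : (⟪s • F, x⟫ • (s • F) : H)
              = (((s : ℂ)) * ⟪F, x⟫ * (s : ℂ)) • F := by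
            rw [ggsp_real_smul_eq, inner_smul_left, Complex.conj_ofReal, smul_smul]
          rw [hre]
          have hcombine : (((s : ℂ)) * ⟪F, x⟫ * (s : ℂ)) • F
              + ((Submodule.orthogonalProjection (Wk f k) x : H)
                + ((c : ℂ) * ⟪F, x⟫) • F
                + (((c : ℂ) * ⟪F, x⟫) • F
                  + ((c : ℂ) ^ 2 * ⟪F, x⟫ * ((‖F‖ : ℂ)) ^ 2) • F))
              = (Submodule.orthogonalProjection (Wk f k) x : H)
                + (((s : ℂ)) * ⟪F, x⟫ * (s : ℂ)
                  + ((c : ℂ) * ⟪F, x⟫) + ((c : ℂ) * ⟪F, x⟫)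
                  + ((c : ℂ)) ^ 2 * ⟪F, x⟫ * ((‖F‖ : ℂ)) ^ 2) • F := by
            module
          rw [hcombine, hcoef, zero_smul, add_zero]
        · -- Case B1 : u ≠ 0
          have hstep : ggspStep K (f K) g = Function.update g K
              (‖f K - ∑ j ∈ Finset.univ.filter (fun j : Fin N => j < K),
                  ⟪g j, f K⟫ • g j‖⁻¹ •
                (f K - ∑ j ∈ Finset.univ.filter (fun j : Fin N => j < K),
                  ⟪g j, f K⟫ • g j)) := by
            rw [ggspStep, if_neg hf0]
            exact if_neg hu
          set u : H := f K - (Submodule.orthogonalProjection (Wk f k) (f K) : H) with hudef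
          have hu' : u ≠ 0 := by rw [← hueq]; exact hu
          have hun : ‖u‖ ≠ 0 := norm_ne_zero_iff.2 hu'
          set e : H := ‖u‖⁻¹ • u with hedef
          have huW : u ∈ (Wk f k)ᗮ := Submodule.sub_starProjection_mem_orthogonal _
          have heW : e ∈ (Wk f k)ᗮ := by
            rw [hedef, ggsp_real_smul_eq]
            exact Submodule.smul_mem _ _ huW
          rw [hstep, hueq, ← hedef, hinsert, Finset.sum_insert hKnot,
            Function.update_self]
          have hrest : ∑ j ∈ Finset.univ.filter (fun j : Fin N => (j : ℕ) < k),
              ⟪Function.update g K e j, x⟫ • Function.update g K e j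
              = (Submodule.orthogonalProjection (Wk f k) x : H) := by
            rw [← IH x]
            refine Finset.sum_congr rfl fun j hj => ?_
            have hjK : j ≠ K := by
              rcases Finset.mem_filter.1 hj with ⟨-, hj'⟩
              exact fun h => absurd (h ▸ hj') (by simp [hKdef])
            rw [Function.update_of_ne hjK]
          rw [hrest]
          -- now : ⟪e, x⟫ • e + P x = P' x
          symm
          apply Submodule.eq_starProjection_of_mem_of_inner_eq_zero
          · -- membership
            have hWle : Wk f k ≤ Wk f (k + 1) := by
              unfold Wk
              exact Submodule.span_mono (Set.image_mono
                (fun j hj => hj.trans (Nat.lt_succ_self k)))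
            have hFmem : f K ∈ Wk f (k + 1) :=
              Submodule.subset_span ⟨K, Nat.lt_succ_self k, rfl⟩
            have humem : u ∈ Wk f (k + 1) := by
              rw [hudef]
              exact sub_mem hFmem (hWle (Submodule.orthogonalProjection (Wk f k) (f K)).2)
            have hemem : e ∈ Wk f (k + 1) := by
              rw [hedef, ggsp_real_smul_eq]
              exact Submodule.smul_mem _ _ humem
            exact add_mem (Submodule.smul_mem _ _ hemem)
              (hWle (Submodule.orthogonalProjection (Wk f k) x).2)
          · -- orthogonality
            intro w hw
            have hbase : ∀ w' ∈ Wk f k,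
                ⟪x - (⟪e, x⟫ • e + (Submodule.orthogonalProjection (Wk f k) x : H)), w'⟫ = 0 := by
              intro w' hw'
              have h1 : ⟪x - (Submodule.orthogonalProjection (Wk f k) x : H), w'⟫ = 0 :=
                (Submodule.mem_orthogonal' _ _).1
                  (Submodule.sub_starProjection_mem_orthogonal x) w' hw'
              have h2 : (⟪e, w'⟫ : ℂ) = 0 :=
                (Submodule.mem_orthogonal' _ _).1 heW w' hw'
              have : x - (⟪e, x⟫ • e + (Submodule.orthogonalProjection (Wk f k) x : H))
                  = (x - (Submodule.orthogonalProjection (Wk f k) x : H)) - ⟪e, x⟫ • e := by abel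
              rw [this, inner_sub_left, h1, inner_smul_left, h2]
              ring
            have hfKcase :
                ⟪x - (⟪e, x⟫ • e + (Submodule.orthogonalProjection (Wk f k) x : H)), f K⟫ = 0 := by
              have hsplit : f K = (Submodule.orthogonalProjection (Wk f k) (f K) : H) + u := by
                rw [hudef]; abel
              rw [hsplit, inner_add_right,
                hbase _ (Submodule.orthogonalProjection (Wk f k) (f K)).2, zero_add]
              have hPxu : (⟪(Submodule.orthogonalProjection (Wk f k) x : H), u⟫ : ℂ) = 0 :=
                (Submodule.mem_orthogonal _ _).1 huW _
                  (Submodule.orthogonalProjection (Wk f k) x).2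
              have hself : (⟪u, u⟫ : ℂ) = ((‖u‖ : ℂ)) ^ 2 := by
                rw [inner_self_eq_norm_sq_to_K]; norm_cast
              rw [inner_sub_left, inner_add_left, hPxu, add_zero, sub_eq_zero]
              simp only [hedef, ggsp_real_smul_eq, inner_smul_left, inner_smul_right,
                Complex.conj_ofReal, hself, map_mul, inner_conj_symm]
              have hC : (‖u‖ : ℂ) ≠ 0 := by exact_mod_cast hun
              push_cast
              field_simp
            revert hw
            rw [hWk1]
            intro hw
            refine Submodule.span_induction ?_ ?_ ?_ ?_ hw
            · rintro w' (rfl | ⟨j, hj, rfl⟩)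
              · exact hfKcase
              · exact hbase _ (Submodule.subset_span ⟨j, hj, rfl⟩)
            · exact inner_zero_right _
            · intro a b _ _ ha hb
              rw [inner_add_right, ha, hb, add_zero]
            · intro r a _ ha
              rw [inner_smul_right, ha, mul_zero]

/-- Structure of `GGSP f` when the last vector is outside the span of the others. -/
lemma GGSP_props {N : ℕ} (f : Fin (N + 1) → H)
    (hlast : f (Fin.last N) ∉ Wk f N) :
    (GGSP f) (Fin.last N)
        = ‖f (Fin.last N) - (Submodule.orthogonalProjection (Wk f N) (f (Fin.last N)) : H)‖⁻¹ •
            (f (Fin.last N) - (Submodule.orthogonalProjection (Wk f N) (f (Fin.last N)) : H)) ∧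
      ∀ j : Fin (N + 1), (j : ℕ) < N → (GGSP f) j ∈ Wk f N := by
  have hNlt : N < N + 1 := Nat.lt_succ_self N
  set g := pGG f N with hgdef
  have IH := pGG_sum_eq_proj f N (Nat.le_succ N)
  have hGG : GGSP f = ggspStep (Fin.last N) (f (Fin.last N)) g := by
    rw [GGSP_eq_pGG, pGG_succ f hNlt]
    rfl
  have hfilt : Finset.univ.filter (fun j : Fin (N + 1) => j < Fin.last N)
      = Finset.univ.filter (fun j : Fin (N + 1) => (j : ℕ) < N) := by
    ext j; simp [Fin.lt_def]
  have hf0 : f (Fin.last N) ≠ 0 := fun h => hlast (h ▸ (Wk f N).zero_mem)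
  have hueq : f (Fin.last N)
      - ∑ j ∈ Finset.univ.filter (fun j : Fin (N + 1) => j < Fin.last N),
          ⟪g j, f (Fin.last N)⟫ • g j
      = f (Fin.last N) - (Submodule.orthogonalProjection (Wk f N) (f (Fin.last N)) : H) := by
    rw [hfilt, IH]
  have hu : f (Fin.last N)
      - ∑ j ∈ Finset.univ.filter (fun j : Fin (N + 1) => j < Fin.last N),
          ⟪g j, f (Fin.last N)⟫ • g j ≠ 0 := by
    rw [hueq]
    intro h
    exact hlast (Submodule.starProjection_eq_self_iff.1 (sub_eq_zero.1 h).symm)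
  have hstep : ggspStep (Fin.last N) (f (Fin.last N)) g = Function.update g (Fin.last N)
      (‖f (Fin.last N)
          - ∑ j ∈ Finset.univ.filter (fun j : Fin (N + 1) => j < Fin.last N),
              ⟪g j, f (Fin.last N)⟫ • g j‖⁻¹ •
        (f (Fin.last N)
          - ∑ j ∈ Finset.univ.filter (fun j : Fin (N + 1) => j < Fin.last N),
              ⟪g j, f (Fin.last N)⟫ • g j)) := by
    rw [ggspStep, if_neg hf0]
    exact if_neg hu
  constructor
  · rw [hGG, hstep, Function.update_self, hueq]
  · intro j hj
    have hjne : j ≠ Fin.last N := by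
      intro h
      rw [h, Fin.val_last] at hj
      exact lt_irrefl N hj
    rw [hGG, hstep, Function.update_of_ne hjne]
    exact mem_of_sum_inner IH j (by simp [hj])

end Auxiliary

/-- If the last frame vector is not in the span of the preceding ones, then from the
first iteration on, the last vector of `Φ^m f` is constantly `α (I - P) fₙ`. -/
theorem ggsp_iterate_last_stabilizes {H : Type*} [NormedAddCommGroup H]
    [InnerProductSpace ℂ H] [FiniteDimensional ℂ H] {n : ℕ} (f : Fin (n + 1) → H)
    (hf : IsFrame f)
    (W : Submodule ℂ H)
    (hW : W = Submodule.span ℂ (Set.range fun i : Fin n => f i.castSucc))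
    (hlast : f (Fin.last n) ∉ W) :
    ∀ m : ℕ, 1 ≤ m →
      (GGSP^[m] f) (Fin.last n) =
        ‖f (Fin.last n) - (W.orthogonalProjection (f (Fin.last n)) : H)‖⁻¹ •
          (f (Fin.last n) - (W.orthogonalProjection (f (Fin.last n)) : H)) := by
  intro m hm
  have hWk : Wk f n = W := by
    rw [hW]
    unfold Wk
    congr 1
    ext v
    constructor
    · rintro ⟨j, hj, rfl⟩
      exact ⟨⟨(j : ℕ), hj⟩, by congr 1⟩
    · rintro ⟨i, rfl⟩
      exact ⟨i.castSucc, i.isLt, rfl⟩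
  set u : H := f (Fin.last n) - (W.orthogonalProjection (f (Fin.last n)) : H) with hudef
  set e : H := ‖u‖⁻¹ • u with hedef
  have hlast' : f (Fin.last n) ∉ Wk f n := by rw [hWk]; exact hlast
  have hu0 : u ≠ 0 := by
    intro h
    rw [hudef] at h
    exact hlast (Submodule.starProjection_eq_self_iff.1 (sub_eq_zero.1 h).symm)
  have hun : ‖u‖ ≠ 0 := norm_ne_zero_iff.2 hu0
  have huW : u ∈ Wᗮ := Submodule.sub_starProjection_mem_orthogonal _
  have heW : e ∈ Wᗮ := by
    rw [hedef, ggsp_real_smul_eq]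
    exact Submodule.smul_mem _ _ huW
  have henorm : ‖e‖ = 1 := by
    rw [hedef, norm_smul, norm_inv, norm_norm]
    field_simp
  have he0 : e ≠ 0 := by
    intro h
    rw [h, norm_zero] at henorm
    norm_num at henorm
  have heWnot : e ∉ W := by
    intro hmem
    exact he0 (inner_self_eq_zero.1 ((Submodule.mem_orthogonal _ _).1 heW e hmem))
  have key : ∀ h : Fin (n + 1) → H,
      (∀ j : Fin (n + 1), (j : ℕ) < n → h j ∈ W) → h (Fin.last n) = e →
      ((∀ j : Fin (n + 1), (j : ℕ) < n → GGSP h j ∈ W) ∧ GGSP h (Fin.last n) = e) := by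
    intro h hmem hlasth
    have hWkle : Wk h n ≤ W := by
      unfold Wk
      rw [Submodule.span_le]
      rintro v ⟨j, hj, rfl⟩
      exact hmem j hj
    have hnotin : h (Fin.last n) ∉ Wk h n := by
      intro hin
      exact heWnot (hWkle (hlasth ▸ hin))
    obtain ⟨h1, h2⟩ := GGSP_props h hnotin
    have hproj0 : (Submodule.orthogonalProjection (Wk h n) (h (Fin.last n)) : H) = 0 := by
      apply proj_eq_zero_of_orth
      exact Submodule.orthogonal_le hWkle (hlasth ▸ heW)
    refine ⟨fun j hj => hWkle (h2 j hj), ?_⟩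
    rw [h1, hproj0, sub_zero, hlasth, henorm, inv_one, one_smul]
  have base : (∀ j : Fin (n + 1), (j : ℕ) < n → GGSP f j ∈ W)
      ∧ GGSP f (Fin.last n) = e := by
    obtain ⟨h1, h2⟩ := GGSP_props f hlast'
    rw [hWk] at h1 h2
    exact ⟨h2, h1⟩
  have main : ∀ m : ℕ, 1 ≤ m →
      (∀ j : Fin (n + 1), (j : ℕ) < n → (GGSP^[m] f) j ∈ W)
        ∧ (GGSP^[m] f) (Fin.last n) = e := by
    intro m hm
    induction m with
    | zero => omega
    | succ m ih =>
        by_cases hm0 : m = 0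
        · subst hm0
          simpa using base
        · obtain ⟨ihm, ihl⟩ := ih (Nat.one_le_iff_ne_zero.2 hm0)
          rw [Function.iterate_succ_apply']
          exact key _ ihm ihl
  exact (main m hm).2
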